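/- In dimension d ≥ 2, any nonempty finite set S of k occupied sites in Z^d has at least √k elements that have at least one empty nearest neighbor (a neighbor in Z^d \ S). -/
import Mathlib

open Classical in
lemma exists_top (d : ℕ) (S : Finset (Fin d → ℤ)) (i : Fin d) (x : Fin d → ℤ)
    (hx : x ∈ S) :
    ∃ t ∈ S.filter (fun x => ∃ y : Fin d → ℤ,
        (∑ i : Fin d, |x i - y i|) = 1 ∧ y ∉ S), ∀ j, j ≠ i → t j = x j := by
  classical
  set C := S.filter (fun y => ∀ j, j ≠ i → y j = x j) with hC
  have hxC : x ∈ C := by simp [hC, hx]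
  have hne : (C.image (fun y => y i)).Nonempty := ⟨x i, Finset.mem_image_of_mem _ hxC⟩
  obtain ⟨t, htC, hti⟩ := Finset.mem_image.mp ((C.image (fun y => y i)).max'_mem hne)
  have htS : t ∈ S := (Finset.mem_filter.mp htC).1
  have htx : ∀ j, j ≠ i → t j = x j := by
    have := (Finset.mem_filter.mp htC).2
    simpa using this
  refine ⟨t, ?_, htx⟩
  refine Finset.mem_filter.mpr ⟨htS, Function.update t i (t i + 1), ?_, ?_⟩
  · rw [Finset.sum_eq_single_of_mem i (Finset.mem_univ i)]
    · simp
    · intro j _ hj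
      simp [Function.update_of_ne hj]
  · intro hu
    have huC : Function.update t i (t i + 1) ∈ C := by
      refine Finset.mem_filter.mpr ⟨hu, fun j hj => ?_⟩
      rw [Function.update_of_ne hj]; exact htx j hj
    have hle : Function.update t i (t i + 1) i ≤ (C.image (fun y => y i)).max' hne :=
      Finset.le_max' _ _ (Finset.mem_image_of_mem (fun y => y i) huC)
    rw [Function.update_self, hti] at hle
    exact absurd hle (not_le.mpr (lt_add_one _))

open Classical in
/-- In dimension d ≥ 2, any nonempty finite set S of k occupied sites
in ℤ^d has at least √k elements having at least one nearest neighbor (ℓ¹-distance 1)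
outside of S. -/
theorem stmt_10 (d : ℕ) (hd : 2 ≤ d) (S : Finset (Fin d → ℤ)) (hS : S.Nonempty) :
    Real.sqrt (S.card : ℝ) ≤
      ((S.filter (fun x => ∃ y : Fin d → ℤ,
        (∑ i : Fin d, |x i - y i|) = 1 ∧ y ∉ S)).card : ℝ) := by
  classical
  set B := S.filter (fun x => ∃ y : Fin d → ℤ,
        (∑ i : Fin d, |x i - y i|) = 1 ∧ y ∉ S) with hB
  have i0 : Fin d := ⟨0, by omega⟩
  have i1 : Fin d := ⟨1, by omega⟩
  set j0 : Fin d := ⟨0, by omega⟩ with hj0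
  set j1 : Fin d := ⟨1, by omega⟩ with hj1
  have hne : j0 ≠ j1 := by
    intro h
    have : (0 : ℕ) = 1 := congrArg Fin.val h
    omega
  choose! t0 ht0B ht0 using fun x (hx : x ∈ S) => exists_top d S j0 x hx
  choose! t1 ht1B ht1 using fun x (hx : x ∈ S) => exists_top d S j1 x hx
  have hcard : S.card ≤ B.card * B.card := by
    have := Finset.card_le_card_of_injOn (f := fun x => (t0 x, t1 x))
      (s := S) (t := B ×ˢ B)
      (fun x hx => Finset.mem_product.mpr ⟨ht0B x hx, ht1B x hx⟩)
      (by
        intro x hx x' hx' h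
        have h0 : t0 x = t0 x' := congrArg Prod.fst h
        have h1 : t1 x = t1 x' := congrArg Prod.snd h
        funext j
        by_cases hj : j = j0
        · subst hj
          have e1 : x j0 = t1 x j0 := (ht1 x hx j0 hne).symm
          have e2 : x' j0 = t1 x' j0 := (ht1 x' hx' j0 hne).symm
          rw [e1, e2, h1]
        · have e1 : x j = t0 x j := (ht0 x hx j hj).symm
          have e2 : x' j = t0 x' j := (ht0 x' hx' j hj).symm
          rw [e1, e2, h0])
    simpa [Finset.card_product] using this
  have hcast : (S.card : ℝ) ≤ (B.card : ℝ) * (B.card : ℝ) := by exact_mod_cast hcard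
  calc Real.sqrt (S.card : ℝ) ≤ Real.sqrt ((B.card : ℝ) * (B.card : ℝ)) :=
        Real.sqrt_le_sqrt hcast
    _ = (B.card : ℝ) := Real.sqrt_mul_self (by positivity)
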